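/- arXiv:2504.21710 — 2 statements merged into one kernel-verified Lean document; each statement's English description precedes it below -/
import Mathlib

section
/- In the same IPCW setting (C ⫫ D | Z, positivity), with U = D ∧ C and Δ = 1{D ≤ C}, one has E[ (1{U ≤ t}Δ + 1{U > t}) / G(U ∧ t | Z) · (U ∧ t) | Z ] = E[ D ∧ t | Z ]. Hence the IPCW-weighted truncated observed time is conditionally unbiased for the restricted survival time D ∧ t. -/
open MeasureTheory

/-- IPCW unbiasedness for the restricted survival time: with `U = D ∧ C`,
`Δ = 1{D ≤ C}`, censoring conditionally independent of `D` given `Z` and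
positivity, the IPCW-weighted truncated observed time `U ∧ t` is conditionally
unbiased for `D ∧ t` given `Z`. -/
theorem ipcw_restricted_time_unbiased
    {Ω : Type*} {mΩ : MeasurableSpace Ω} (μ : Measure Ω) [IsProbabilityMeasure μ]
    (m m' : MeasurableSpace Ω) (hmm' : m ≤ m') (hm' : m' ≤ mΩ)
    (D C : Ω → ℝ) (G : Ω → ℝ → ℝ) (t ε : ℝ) (ht : 0 < t) (hε : 0 < ε)
    (hDpos : ∀ᵐ ω ∂μ, 0 < D ω) (hCpos : ∀ᵐ ω ∂μ, 0 < C ω)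
    (hDmeas : Measurable[m'] D)
    (hGmeas : ∀ u, StronglyMeasurable[m] (fun ω => G ω u))
    (hGpos : ∀ᵐ ω ∂μ, ∀ u ≤ t, ε ≤ G ω u)
    (hGle : ∀ᵐ ω ∂μ, ∀ u, G ω u ≤ 1)
    -- conditional independence: E[1{C ≥ D∧t} | D, Z] = G(D∧t | Z)
    (hCI₁ : μ[fun ω => if min (D ω) t ≤ C ω then (1 : ℝ) else 0 | m']
        =ᵐ[μ] fun ω => G ω (min (D ω) t))
    -- conditional independence: E[1{C > t} | D, Z] = G(t | Z)
    (hCI₂ : μ[fun ω => if t < C ω then (1 : ℝ) else 0 | m']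
        =ᵐ[μ] fun ω => G ω t) :
    μ[fun ω =>
        ((if min (D ω) (C ω) ≤ t ∧ D ω ≤ C ω then (1 : ℝ) else 0) +
            (if t < min (D ω) (C ω) then (1 : ℝ) else 0)) /
          G ω (min (min (D ω) (C ω)) t) * min (min (D ω) (C ω)) t | m]
      =ᵐ[μ] μ[fun ω => min (D ω) t | m] := by
  classical
  set X₁ : Ω → ℝ := fun ω => if min (D ω) t ≤ C ω then (1 : ℝ) else 0 with hX₁def
  set X₂ : Ω → ℝ := fun ω => if t < C ω then (1 : ℝ) else 0 with hX₂def
  set f : Ω → ℝ := fun ω =>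
      ((if min (D ω) (C ω) ≤ t ∧ D ω ≤ C ω then (1 : ℝ) else 0) +
          (if t < min (D ω) (C ω) then (1 : ℝ) else 0)) /
        G ω (min (min (D ω) (C ω)) t) * min (min (D ω) (C ω)) t with hfdef
  -- integrability of the indicators, by contradiction
  have hX₁int : Integrable X₁ μ := by
    by_contra h
    rw [condExp_of_not_integrable h] at hCI₁
    obtain ⟨ω, h0, hpos⟩ := (hCI₁.symm.and hGpos).exists
    have := hpos (min (D ω) t) (min_le_right _ _)
    simp only [Pi.zero_apply] at h0
    rw [h0] at this
    linarith
  have hX₂int : Integrable X₂ μ := by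
    by_contra h
    rw [condExp_of_not_integrable h] at hCI₂
    obtain ⟨ω, h0, hpos⟩ := (hCI₂.symm.and hGpos).exists
    have := hpos t le_rfl
    simp only [Pi.zero_apply] at h0
    rw [h0] at this
    linarith
  -- the measurable weights
  set a : Ω → ℝ := fun ω => if D ω ≤ t then min (D ω) t / (μ[X₁|m']) ω else 0 with hadef
  set b : Ω → ℝ := fun ω => if t < D ω then t / G ω t else 0 with hbdef
  have ha_sm : StronglyMeasurable[m'] a := by
    refine Measurable.stronglyMeasurable ?_
    exact Measurable.ite (measurableSet_le hDmeas measurable_const)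
      ((hDmeas.min measurable_const).div stronglyMeasurable_condExp.measurable)
      measurable_const
  have hb_sm : StronglyMeasurable[m'] b := by
    refine Measurable.stronglyMeasurable ?_
    exact Measurable.ite (measurableSet_lt measurable_const hDmeas)
      (measurable_const.div ((hGmeas t).mono hmm').measurable) measurable_const
  -- pointwise decomposition with the "true" weight
  have hkey : ∀ ω, f ω =
      (if D ω ≤ t then min (D ω) t / G ω (min (D ω) t) else 0) * X₁ ω + b ω * X₂ ω := by
    intro ω
    simp only [hfdef, hX₁def, hX₂def, hbdef]
    rcases le_or_gt (D ω) t with hDt | hDt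
    · rcases le_or_gt (D ω) (C ω) with hDC | hDC
      · have h1 : min (D ω) (C ω) = D ω := min_eq_left hDC
        have h2 : min (D ω) t = D ω := min_eq_left hDt
        simp [h1, h2, hDt, hDC, not_lt.mpr hDt, not_lt.mpr (hDC.trans (le_refl _)), div_eq_inv_mul]
      · -- C < D ≤ t
        have h1 : min (D ω) (C ω) = C ω := min_eq_right hDC.le
        have h2 : ¬ min (D ω) t ≤ C ω := by
          rw [min_eq_left hDt]; exact not_le.mpr hDC
        have h3 : ¬ t < C ω := not_lt.mpr (hDC.le.trans hDt)
        have h4 : ¬ t < min (D ω) (C ω) := by rw [h1]; exact h3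
        simp [h2, h3, h4, not_le.mpr hDC]
    · rcases le_or_gt (C ω) t with hCt | hCt
      · -- C ≤ t < D
        have hCD : C ω < D ω := lt_of_le_of_lt hCt hDt
        have h1 : min (D ω) (C ω) = C ω := min_eq_right hCD.le
        have h2 : ¬ D ω ≤ C ω := not_le.mpr hCD
        have h4 : ¬ t < min (D ω) (C ω) := by rw [h1]; exact not_lt.mpr hCt
        simp [h1, h2, h4, not_le.mpr hDt, not_lt.mpr hCt]
      · -- t < D, t < C
        have h1 : t < min (D ω) (C ω) := lt_min hDt hCt
        have h2 : min (min (D ω) (C ω)) t = t := min_eq_right h1.le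
        have h3 : ¬ (min (D ω) (C ω) ≤ t ∧ D ω ≤ C ω) := fun h => absurd h.1 (not_le.mpr h1)
        simp [h1, h2, h3, hDt, hCt, not_le.mpr hDt, not_le.mpr hCt, div_eq_inv_mul]
  -- a.e. decomposition with the conditional-expectation weight
  have hfeq : f =ᵐ[μ] fun ω => a ω * X₁ ω + b ω * X₂ ω := by
    filter_upwards [hCI₁] with ω hω
    rw [hkey ω]
    simp only [hadef, hω]
  -- bounds
  have ha_bd : ∀ᵐ ω ∂μ, ‖a ω‖ ≤ t / ε := by
    filter_upwards [hCI₁, hGpos, hDpos] with ω hω hG hD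
    simp only [hadef]
    split_ifs with h
    · rw [hω]
      have hGε : ε ≤ G ω (min (D ω) t) := hG _ (min_le_right _ _)
      have h0 : 0 < min (D ω) t := lt_min hD ht
      rw [Real.norm_eq_abs, abs_of_nonneg (div_nonneg h0.le (hε.trans_le hGε).le)]
      exact div_le_div₀ (le_of_lt ht) (min_le_right _ _) hε hGε
    · rw [norm_zero]; positivity
  have hb_bd : ∀ᵐ ω ∂μ, ‖b ω‖ ≤ t / ε := by
    filter_upwards [hGpos] with ω hG
    simp only [hbdef]
    split_ifs with h
    · have hGε : ε ≤ G ω t := hG t le_rfl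
      rw [Real.norm_eq_abs, abs_of_nonneg (div_nonneg ht.le (hε.trans_le hGε).le)]
      exact div_le_div₀ ht.le le_rfl hε hGε
    · rw [norm_zero]; positivity
  have hX₁bd : ∀ ω, ‖X₁ ω‖ ≤ 1 := by
    intro ω; simp only [hX₁def]; split_ifs <;> simp
  have hX₂bd : ∀ ω, ‖X₂ ω‖ ≤ 1 := by
    intro ω; simp only [hX₂def]; split_ifs <;> simp
  -- integrability of the products
  have haX₁int : Integrable (fun ω => a ω * X₁ ω) μ := by
    refine Integrable.mono' (integrable_const (t / ε))
      (((ha_sm.mono hm').aestronglyMeasurable).mul hX₁int.1) ?_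
    filter_upwards [ha_bd] with ω hω
    calc ‖a ω * X₁ ω‖ = ‖a ω‖ * ‖X₁ ω‖ := norm_mul _ _
      _ ≤ (t / ε) * 1 := mul_le_mul hω (hX₁bd ω) (norm_nonneg _) (by positivity)
      _ = t / ε := mul_one _
  have hbX₂int : Integrable (fun ω => b ω * X₂ ω) μ := by
    refine Integrable.mono' (integrable_const (t / ε))
      (((hb_sm.mono hm').aestronglyMeasurable).mul hX₂int.1) ?_
    filter_upwards [hb_bd] with ω hω
    calc ‖b ω * X₂ ω‖ = ‖b ω‖ * ‖X₂ ω‖ := norm_mul _ _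
      _ ≤ (t / ε) * 1 := mul_le_mul hω (hX₂bd ω) (norm_nonneg _) (by positivity)
      _ = t / ε := mul_one _
  -- conditional expectation given m'
  have hstep : μ[f|m'] =ᵐ[μ] fun ω => min (D ω) t := by
    have h1 : μ[f|m'] =ᵐ[μ] μ[(fun ω => a ω * X₁ ω) + (fun ω => b ω * X₂ ω)|m'] :=
      condExp_congr_ae (hfeq.trans (by filter_upwards with ω; rfl))
    have h2 : μ[(fun ω => a ω * X₁ ω) + (fun ω => b ω * X₂ ω)|m']
        =ᵐ[μ] μ[fun ω => a ω * X₁ ω|m'] + μ[fun ω => b ω * X₂ ω|m'] :=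
      condExp_add haX₁int hbX₂int m'
    have h3 : μ[fun ω => a ω * X₁ ω|m'] =ᵐ[μ] fun ω => a ω * (μ[X₁|m']) ω := by
      have := condExp_mul_of_stronglyMeasurable_left (μ := μ) ha_sm
        haX₁int hX₁int
      exact this
    have h4 : μ[fun ω => b ω * X₂ ω|m'] =ᵐ[μ] fun ω => b ω * (μ[X₂|m']) ω := by
      have := condExp_mul_of_stronglyMeasurable_left (μ := μ) hb_sm
        hbX₂int hX₂int
      exact this
    refine (h1.trans h2).trans ?_
    have h5 : (fun ω => a ω * (μ[X₁|m']) ω) + (fun ω => b ω * (μ[X₂|m']) ω)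
        =ᵐ[μ] fun ω => min (D ω) t := by
      filter_upwards [hCI₁, hCI₂, hGpos, hDpos] with ω hω₁ hω₂ hG hD
      simp only [Pi.add_apply, hadef, hbdef, hω₁, hω₂]
      rcases le_or_gt (D ω) t with hDt | hDt
      · have h2 : min (D ω) t = D ω := min_eq_left hDt
        have hGε : ε ≤ G ω (D ω) := by rw [← h2]; exact hG _ (min_le_right _ _)
        have hne : G ω (D ω) ≠ 0 := (hε.trans_le hGε).ne'
        simp only [if_pos hDt, if_neg (not_lt.mpr hDt), h2, zero_mul, add_zero]
        exact div_mul_cancel₀ _ hne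
      · have hGε : ε ≤ G ω t := hG t le_rfl
        have hne : G ω t ≠ 0 := (hε.trans_le hGε).ne'
        simp only [if_neg (not_le.mpr hDt), if_pos hDt, zero_mul, zero_add]
        rw [min_eq_right hDt.le]
        exact div_mul_cancel₀ _ hne
    exact (h3.add h4).trans h5
  -- tower property
  calc μ[f|m] =ᵐ[μ] μ[μ[f|m']|m] := (condExp_condExp_of_le hmm' hm').symm
    _ =ᵐ[μ] μ[fun ω => min (D ω) t|m] := condExp_congr_ae hstep
end

section
/- In the IPCW setting with recurrent event times T_q ≤ D (q = 1,2,…) and C ⫫ (D, (T_q)) given Z, the weighted recurrent count satisfies E[ (1{U ≤ t}Δ + 1{U > t}) / G(U ∧ t|Z) · Σ_q 1{T_q ≤ U ∧ t} | Z ] = E[ Σ_q 1{T_q ≤ D ∧ t} | Z ], assuming the right side is finite. -/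
open MeasureTheory
open scoped NNReal

/-- IPCW unbiasedness for recurrent-event counts: with recurrent event times
`T_q ≤ D`, `U = D ∧ C`, `Δ = 1{D ≤ C}`, and censoring conditionally independent
of `(D, (T_q))` given `Z`, the IPCW-weighted observed count
`Σ_q 1{T_q ≤ U ∧ t}` is conditionally unbiased for the full-data count
`Σ_q 1{T_q ≤ D ∧ t}` given `Z`, assuming the latter is integrable. -/
theorem ipcw_recurrent_count_unbiased
    {Ω : Type*} {mΩ : MeasurableSpace Ω} (μ : Measure Ω) [IsProbabilityMeasure μ]
    (m m' : MeasurableSpace Ω) (hmm' : m ≤ m') (hm' : m' ≤ mΩ)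
    (D C : Ω → ℝ) (T : ℕ → Ω → ℝ) (G : Ω → ℝ → ℝ) (N : Ω → ℝ → ℝ)
    (t ε : ℝ) (ht : 0 < t) (hε : 0 < ε)
    (hDpos : ∀ᵐ ω ∂μ, 0 < D ω) (hCpos : ∀ᵐ ω ∂μ, 0 < C ω)
    (hTD : ∀ q ω, T q ω ≤ D ω)
    (hN : ∀ ω s, N ω s = ∑' q : ℕ, if T q ω ≤ s then (1 : ℝ) else 0)
    (hDmeas : Measurable[m'] D) (hTmeas : ∀ q, Measurable[m'] (T q))
    (hGmeas : ∀ u, StronglyMeasurable[m] (fun ω => G ω u))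
    (hGpos : ∀ᵐ ω ∂μ, ∀ u ≤ t, ε ≤ G ω u)
    (hGle : ∀ᵐ ω ∂μ, ∀ u, G ω u ≤ 1)
    (hNint : Integrable (fun ω => N ω (min (D ω) t)) μ)
    -- conditional independence: E[1{C ≥ D∧t} | D, (T_q), Z] = G(D∧t | Z)
    (hCI₁ : μ[fun ω => if min (D ω) t ≤ C ω then (1 : ℝ) else 0 | m']
        =ᵐ[μ] fun ω => G ω (min (D ω) t))
    -- conditional independence: E[1{C > t} | D, (T_q), Z] = G(t | Z)
    (hCI₂ : μ[fun ω => if t < C ω then (1 : ℝ) else 0 | m']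
        =ᵐ[μ] fun ω => G ω t) :
    μ[fun ω =>
        ((if min (D ω) (C ω) ≤ t ∧ D ω ≤ C ω then (1 : ℝ) else 0) +
            (if t < min (D ω) (C ω) then (1 : ℝ) else 0)) /
          G ω (min (min (D ω) (C ω)) t) * N ω (min (min (D ω) (C ω)) t) | m]
      =ᵐ[μ] μ[fun ω => N ω (min (D ω) t) | m] := by
  classical
  set X : Ω → ℝ := fun ω => if min (D ω) t ≤ C ω then (1 : ℝ) else 0 with hX
  set Y : Ω → ℝ := fun ω => if t < C ω then (1 : ℝ) else 0 with hY
  set EX : Ω → ℝ := μ[X | m'] with hEXdef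
  set EY : Ω → ℝ := μ[Y | m'] with hEYdef
  set Nt : Ω → ℝ := fun ω => N ω (min (D ω) t) with hNt
  set F : Ω → ℝ := fun ω =>
      ((if min (D ω) (C ω) ≤ t ∧ D ω ≤ C ω then (1 : ℝ) else 0) +
          (if t < min (D ω) (C ω) then (1 : ℝ) else 0)) /
        G ω (min (min (D ω) (C ω)) t) * N ω (min (min (D ω) (C ω)) t) with hF
  have hEX : EX =ᵐ[μ] fun ω => G ω (min (D ω) t) := hCI₁
  have hEY : EY =ᵐ[μ] fun ω => G ω t := hCI₂
  -- nonnegativity of N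
  have hN0 : ∀ ω s, 0 ≤ N ω s := by
    intro ω s
    rw [hN]
    exact tsum_nonneg fun q => by split <;> norm_num
  -- strong measurability of Nt w.r.t. m'
  have hNt_m : Measurable[m'] Nt := by
      have heq : Nt = fun ω =>
          (((∑' q : ℕ, (if T q ω ≤ min (D ω) t then (1 : ℝ≥0) else 0)) : ℝ≥0) : ℝ) := by
        funext ω
        rw [hNt]
        simp only [hN]
        rw [NNReal.coe_tsum]
        congr 1
        funext q
        split <;> simp
      rw [heq]
      exact measurable_coe_nnreal_real.comp
        (Measurable.nnreal_tsum fun q =>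
          Measurable.ite (measurableSet_le (hTmeas q) (hDmeas.min measurable_const))
            measurable_const measurable_const)
  have hNt_sm : StronglyMeasurable[m'] Nt := hNt_m.stronglyMeasurable
  -- X is integrable (otherwise its condexp would be 0, contradicting G ≥ ε)
  have hXint : Integrable X μ := by
    by_contra h
    have h0 : μ[X | m'] = 0 := condExp_of_not_integrable h
    have : ∀ᵐ ω ∂μ, False := by
      filter_upwards [hEX, hGpos] with ω h1 h2
      rw [hEXdef, h0] at h1
      have := h2 (min (D ω) t) (min_le_right _ _)
      rw [← h1] at this
      simp at this
      exact absurd this (not_le.2 hε)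
    exact (IsProbabilityMeasure.ne_zero μ) (by simpa using this)
  have hYint : Integrable Y μ := by
    by_contra h
    have h0 : μ[Y | m'] = 0 := condExp_of_not_integrable h
    have : ∀ᵐ ω ∂μ, False := by
      filter_upwards [hEY, hGpos] with ω h1 h2
      rw [hEYdef, h0] at h1
      have := h2 t le_rfl
      rw [← h1] at this
      simp at this
      exact absurd this (not_le.2 hε)
    exact (IsProbabilityMeasure.ne_zero μ) (by simpa using this)
  -- the m'-measurable weights
  set a : Ω → ℝ := fun ω => (if D ω ≤ t then (1 : ℝ) else 0) * Nt ω / EX ω with ha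
  set b : Ω → ℝ := fun ω => (if t < D ω then (1 : ℝ) else 0) * Nt ω / EY ω with hb
  have hind1 : Measurable[m'] (fun ω => if D ω ≤ t then (1 : ℝ) else 0) :=
    Measurable.ite (measurableSet_le hDmeas measurable_const) measurable_const
      measurable_const
  have hind2 : Measurable[m'] (fun ω => if t < D ω then (1 : ℝ) else 0) :=
    Measurable.ite (measurableSet_lt measurable_const hDmeas) measurable_const
      measurable_const
  have ha_sm : StronglyMeasurable[m'] a :=
    (((hind1.mul hNt_m).div (stronglyMeasurable_condExp.measurable))).stronglyMeasurable
  have hb_sm : StronglyMeasurable[m'] b :=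
    (((hind2.mul hNt_m).div (stronglyMeasurable_condExp.measurable))).stronglyMeasurable
  -- bounds for X, Y
  have hX01 : ∀ ω, 0 ≤ X ω ∧ X ω ≤ 1 := fun ω => by
    rcases le_or_gt (min (D ω) t) (C ω) with h | h
    · simp only [hX, if_pos h]; norm_num
    · simp only [hX, if_neg (not_le.2 h)]; norm_num
  have hY01 : ∀ ω, 0 ≤ Y ω ∧ Y ω ≤ 1 := fun ω => by
    rcases lt_or_ge t (C ω) with h | h
    · simp only [hY, if_pos h]; norm_num
    · simp only [hY, if_neg (not_lt.2 h)]; norm_num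
  -- integrability of a * X
  have haX_int : Integrable (a * X) μ := by
    refine Integrable.mono (hNint.div_const ε) ?_ ?_
    · exact ((ha_sm.mono hm').aestronglyMeasurable.mul hXint.1)
    · filter_upwards [hEX, hGpos] with ω h1 h2
      have hEXε : ε ≤ EX ω := by rw [h1]; exact h2 _ (min_le_right _ _)
      have hEXpos : 0 < EX ω := lt_of_lt_of_le hε hEXε
      have hind : (0:ℝ) ≤ (if D ω ≤ t then (1:ℝ) else 0) ∧
          (if D ω ≤ t then (1:ℝ) else 0) ≤ 1 := by constructor <;> split <;> norm_num
      have hNt0 : 0 ≤ Nt ω := hN0 ω _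
      have h0 : 0 ≤ a ω * X ω := by
        apply mul_nonneg _ (hX01 ω).1
        exact div_nonneg (mul_nonneg hind.1 hNt0) hEXpos.le
      simp only [Pi.mul_apply, Real.norm_eq_abs]
      rw [abs_of_nonneg h0, abs_of_nonneg (div_nonneg hNt0 hε.le)]
      calc a ω * X ω ≤ a ω * 1 := by
            apply mul_le_mul_of_nonneg_left (hX01 ω).2
            exact div_nonneg (mul_nonneg hind.1 hNt0) hEXpos.le
        _ = (if D ω ≤ t then (1:ℝ) else 0) * Nt ω / EX ω := by rw [mul_one]
        _ ≤ Nt ω / ε := by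
            apply div_le_div₀ hNt0 _ hε hEXε
            calc (if D ω ≤ t then (1:ℝ) else 0) * Nt ω ≤ 1 * Nt ω :=
                  mul_le_mul_of_nonneg_right hind.2 hNt0
              _ = Nt ω := one_mul _
  have hbY_int : Integrable (b * Y) μ := by
    refine Integrable.mono (hNint.div_const ε) ?_ ?_
    · exact ((hb_sm.mono hm').aestronglyMeasurable.mul hYint.1)
    · filter_upwards [hEY, hGpos] with ω h1 h2
      have hEYε : ε ≤ EY ω := by rw [h1]; exact h2 t le_rfl
      have hEYpos : 0 < EY ω := lt_of_lt_of_le hε hEYε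
      have hind : (0:ℝ) ≤ (if t < D ω then (1:ℝ) else 0) ∧
          (if t < D ω then (1:ℝ) else 0) ≤ 1 := by constructor <;> split <;> norm_num
      have hNt0 : 0 ≤ Nt ω := hN0 ω _
      have h0 : 0 ≤ b ω * Y ω := by
        apply mul_nonneg _ (hY01 ω).1
        exact div_nonneg (mul_nonneg hind.1 hNt0) hEYpos.le
      simp only [Pi.mul_apply, Real.norm_eq_abs]
      rw [abs_of_nonneg h0, abs_of_nonneg (div_nonneg hNt0 hε.le)]
      calc b ω * Y ω ≤ b ω * 1 := by
            apply mul_le_mul_of_nonneg_left (hY01 ω).2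
            exact div_nonneg (mul_nonneg hind.1 hNt0) hEYpos.le
        _ = (if t < D ω then (1:ℝ) else 0) * Nt ω / EY ω := by rw [mul_one]
        _ ≤ Nt ω / ε := by
            apply div_le_div₀ hNt0 _ hε hEYε
            calc (if t < D ω then (1:ℝ) else 0) * Nt ω ≤ 1 * Nt ω :=
                  mul_le_mul_of_nonneg_right hind.2 hNt0
              _ = Nt ω := one_mul _
  -- pointwise a.e. identity: F = a·X + b·Y
  have hkey : F =ᵐ[μ] a * X + b * Y := by
    filter_upwards [hEX, hEY, hGpos] with ω h1 h2 h3
    have h1' : EX ω = G ω (min (D ω) t) := h1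
    have h2' : EY ω = G ω t := h2
    simp only [hF, Pi.add_apply, Pi.mul_apply, ha, hb, hX, hY, hNt]
    rcases le_or_gt (D ω) t with hDt | hDt
    · rcases le_or_gt (D ω) (C ω) with hDC | hDC
      · simp only [min_eq_left hDC, min_eq_left hDt, hDt, hDC, not_lt.2 hDt, h1',
          min_eq_left hDt, and_self, if_true, if_false, ite_true, ite_false,
          zero_mul, zero_div, mul_zero, add_zero, one_mul, mul_one]
        ring
      · have hCt : C ω ≤ t := hDC.le.trans hDt
        simp [min_eq_right hDC.le, min_eq_left hCt, min_eq_left hDt, hDC.not_ge,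
          not_lt.2 hCt, not_lt.2 hDt, hDt]
    · rcases le_or_gt (C ω) t with hCt | hCt
      · simp [min_eq_right (hCt.trans hDt.le), min_eq_left hCt, min_eq_right hDt.le,
          (lt_of_le_of_lt hCt hDt).not_ge, not_lt.2 hCt, hDt.not_ge, hDt]
      · have hU : t < min (D ω) (C ω) := lt_min hDt hCt
        simp only [min_eq_right hU.le, min_eq_right hDt.le, hU, hU.not_ge, hDt.not_ge,
          hDt, hCt, hCt.le, h2', and_false, false_and, true_and, and_true, if_true, if_false, ite_true, ite_false,
          zero_mul, zero_div, mul_zero, zero_add, add_zero, one_mul, mul_one, zero_div]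
        ring
  -- conditional expectation given m' equals Nt
  have hcond : μ[F | m'] =ᵐ[μ] Nt := by
    have e1 : μ[F | m'] =ᵐ[μ] μ[a * X + b * Y | m'] := condExp_congr_ae hkey
    have e2 : μ[a * X + b * Y | m'] =ᵐ[μ] μ[a * X | m'] + μ[b * Y | m'] :=
      condExp_add haX_int hbY_int m'
    have e3 : μ[a * X | m'] =ᵐ[μ] a * EX :=
      condExp_mul_of_stronglyMeasurable_left ha_sm haX_int hXint
    have e4 : μ[b * Y | m'] =ᵐ[μ] b * EY :=
      condExp_mul_of_stronglyMeasurable_left hb_sm hbY_int hYint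
    refine e1.trans (e2.trans ?_)
    have e5 : μ[a * X | m'] + μ[b * Y | m'] =ᵐ[μ] a * EX + b * EY := e3.add e4
    refine e5.trans ?_
    filter_upwards [hEX, hEY, hGpos] with ω h1 h2 h3
    have hEXne : EX ω ≠ 0 := by
      rw [h1]; exact ne_of_gt (lt_of_lt_of_le hε (h3 _ (min_le_right _ _)))
    have hEYne : EY ω ≠ 0 := by
      rw [h2]; exact ne_of_gt (lt_of_lt_of_le hε (h3 t le_rfl))
    simp only [Pi.add_apply, Pi.mul_apply, ha, hb]
    rw [div_mul_cancel₀ _ hEXne, div_mul_cancel₀ _ hEYne]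
    rcases le_or_gt (D ω) t with hDt | hDt
    · rw [if_pos hDt, if_neg (not_lt.2 hDt)]; ring
    · rw [if_neg (not_le.2 hDt), if_pos hDt]; ring
  -- tower property
  calc μ[F | m] =ᵐ[μ] μ[μ[F | m'] | m] := (condExp_condExp_of_le hmm' hm').symm
    _ =ᵐ[μ] μ[Nt | m] := condExp_congr_ae hcond
end
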